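/- Let V be a finite-dimensional vector space over a field K and A : V → V a nilpotent linear map. Then V has a basis of the form {a₁, Aa₁, ..., A^{k₁−1}a₁, ..., a_s, Aa_s, ..., A^{k_s−1}a_s} with A^{k_i}a_i = 0 for each i; equivalently, I + A is conjugate to a direct sum of Jordan blocks with 1s on the diagonal. -/

import Mathlib

open Polynomial Module
open scoped DirectSum
set_option maxHeartbeats 2000000
universe u v

lemma quot_xpow_basis (K : Type u) [Field K] (k : ℕ) :
    ∃ b : Basis (Fin k) K (K[X] ⧸ (K[X] ∙ ((X:K[X]) ^ k))),
      ∀ j : Fin k, b j = Submodule.Quotient.mk ((X:K[X])^(j:ℕ)) := by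
  let Q := K[X] ⧸ (K[X] ∙ ((X:K[X]) ^ k))
  let pb := AdjoinRoot.powerBasis (K := K) (pow_ne_zero k (X_ne_zero))
  have hdim : pb.dim = k := by
    show natDegree _ = k
    simp
  let idE : AdjoinRoot ((X:K[X])^k) ≃ₗ[K] Q :=
    { toFun := id, invFun := id, map_add' := fun _ _ => rfl,
      map_smul' := fun c x => by
        obtain ⟨y, rfl⟩ := Submodule.Quotient.mk_surjective _ x
        show (c • (Submodule.Quotient.mk y : AdjoinRoot ((X:K[X])^k)))
            = (c • (Submodule.Quotient.mk y : Q) : Q)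
        rw [← Submodule.Quotient.mk_smul],
      left_inv := fun _ => rfl, right_inv := fun _ => rfl }
  refine ⟨(pb.basis.map idE).reindex (finCongr hdim), fun j => ?_⟩
  rw [Basis.reindex_apply, Basis.map_apply, PowerBasis.basis_eq_pow]
  have h1 : pb.gen ^ (((finCongr hdim).symm j : Fin pb.dim) : ℕ)
      = AdjoinRoot.mk _ ((X:K[X])^(j:ℕ)) := by
    rw [AdjoinRoot.powerBasis_gen, map_pow]
    rfl
  rw [h1]
  rfl

lemma dfinsupp_basis_apply {ι : Type*} [DecidableEq ι] {R : Type*} [Semiring R]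
    {M : ι → Type*} [∀ i, AddCommMonoid (M i)] [∀ i, Module R (M i)]
    {η : ι → Type*} (b : ∀ i, Basis (η i) R (M i)) (i : ι) (j : η i) :
    DFinsupp.basis b ⟨i, j⟩ = DFinsupp.single i (b i j) := by
  rw [Basis.apply_eq_iff]
  show (sigmaFinsuppLequivDFinsupp R).symm
      ((DFinsupp.mapRange.linearEquiv fun i => (b i).repr) (DFinsupp.single i (b i j)))
      = Finsupp.single ⟨i, j⟩ 1
  rw [LinearEquiv.symm_apply_eq, DFinsupp.mapRange.linearEquiv_apply, DFinsupp.mapRange_single,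
    sigmaFinsuppLequivDFinsupp_apply]
  rw [Basis.repr_self]
  exact (sigmaFinsuppEquivDFinsupp_single ⟨i, j⟩ 1).symm

lemma directSum_smul_single {ι : Type*} [DecidableEq ι] {R : Type*} [Semiring R]
    {M : ι → Type*} [∀ i, AddCommMonoid (M i)] [∀ i, Module R (M i)] (i : ι) (r : R)
    (x : M i) :
    r • (DFinsupp.single i x : ⨁ i, M i) = DFinsupp.single i (r • x) :=
  ((DirectSum.lof R ι M i).map_smul r x).symm

theorem nilpotent_jordan_basis_aux {K : Type u} {V : Type v} [Field K] [AddCommGroup V]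
    [Module K V]
    [FiniteDimensional K V] (A : V →ₗ[K] V) (hA : IsNilpotent A) :
    ∃ (s : ℕ) (k : Fin s → ℕ) (a : Fin s → V)
      (B : Basis ((i : Fin s) × Fin (k i)) K V),
      (∀ i : Fin s, (A ^ (k i)) (a i) = 0) ∧
      (∀ (i : Fin s) (j : Fin (k i)), B ⟨i, j⟩ = (A ^ (j : ℕ)) (a i)) := by
  classical
  obtain ⟨n, hn⟩ := hA
  let W := ULift.{u} (Module.AEval' A)
  haveI : Module.Finite K[X] W := Module.Finite.equiv (ULift.moduleEquiv (R := K[X])).symm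
  have hkill : ∀ x : W, (X ^ n : K[X]) • x = 0 := by
    intro x
    have h : (X ^ n : K[X]) • x.down = 0 := by
      have h2 := Module.AEval.of_symm_smul (R := K) (M := V) A (X ^ n) x.down
      simp only [map_pow, aeval_X] at h2
      apply (Module.AEval.of K V A).symm.injective
      rw [h2]
      show (A ^ n) _ = _
      rw [hn]; simp
    exact ULift.ext _ _ h
  have hT : Module.IsTorsion K[X] W := fun x =>
    ⟨⟨X ^ n, mem_nonZeroDivisors_of_ne_zero (pow_ne_zero _ X_ne_zero)⟩, hkill x⟩
  obtain ⟨ι, hι, p, hp, e, ⟨f⟩⟩ := Module.equiv_directSum_of_isTorsion hT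
  haveI := hι
  have hdvd : ∀ i : ι, (p i ^ e i) ∣ (X : K[X]) ^ n := by
    intro i
    have hall : ∀ w', (X ^ n : K[X]) • f w' = 0 := by
      intro w'
      rw [← map_smul, hkill, map_zero]
    have hy := hall (f.symm (DFinsupp.single i
      (Submodule.Quotient.mk 1 : K[X] ⧸ (K[X] ∙ p i ^ e i))))
    rw [f.apply_symm_apply] at hy
    rw [directSum_smul_single] at hy
    have hcomp : (DFinsupp.single i ((X ^ n : K[X]) •
        (Submodule.Quotient.mk 1 : K[X] ⧸ (K[X] ∙ p i ^ e i))) :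
        ⨁ i : ι, K[X] ⧸ (K[X] ∙ p i ^ e i)) i = 0 := by rw [hy]; rfl
    rw [DFinsupp.single_eq_same, ← Submodule.Quotient.mk_smul, smul_eq_mul, mul_one,
      Submodule.Quotient.mk_eq_zero] at hcomp
    exact (Ideal.mem_span_singleton).mp hcomp
  have hspan : ∀ i : ι, (K[X] ∙ (p i ^ e i)) = (K[X] ∙ ((X : K[X]) ^ e i)) := by
    intro i
    rcases Nat.eq_zero_or_pos (e i) with h0 | hpos
    · rw [h0, pow_zero, pow_zero]
    · have hpx : Associated (p i) (X : K[X]) := by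
        have h1 : p i ∣ (X : K[X]) ^ n :=
          dvd_trans (dvd_pow_self (p i) hpos.ne') (hdvd i)
        have hprime : Prime (p i) := (hp i).prime
        have h2 : p i ∣ (X : K[X]) := hprime.dvd_of_dvd_pow h1
        exact (hp i).associated_of_dvd Polynomial.irreducible_X h2
      exact Ideal.span_singleton_eq_span_singleton.mpr (hpx.pow_pow)
  -- transfer everything to the direct sum of quotients by powers of X
  let g : W ≃ₗ[K[X]] ⨁ i : ι, K[X] ⧸ (K[X] ∙ ((X : K[X]) ^ e i)) :=
    f.trans (DFinsupp.mapRange.linearEquiv fun i => Submodule.quotEquivOfEq _ _ (hspan i))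
  let E0 : V ≃ₗ[K] W :=
    (Module.AEval.of K V A).trans (ULift.moduleEquiv (R := K)).symm
  let G : V ≃ₗ[K] ⨁ i : ι, K[X] ⧸ (K[X] ∙ ((X : K[X]) ^ e i)) :=
    E0.trans (g.restrictScalars K)
  have hG : ∀ v : V, G (A v) = (X : K[X]) • G v := by
    intro v
    have h1 : E0 (A v) = (X : K[X]) • E0 v := by
      apply ULift.ext
      show Module.AEval.of K V A (A v) = ((X : K[X]) • E0 v).down
      have h2 : ((X : K[X]) • E0 v).down = (X : K[X]) • (E0 v).down := rfl
      rw [h2]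
      exact (Module.AEval.X_smul_of A v).symm
    show g (E0 (A v)) = (X : K[X]) • g (E0 v)
    rw [h1, map_smul]
  -- bases of the components
  choose bQ hbQ using fun i : ι => quot_xpow_basis K (e i)
  let BD : Basis ((i : ι) × Fin (e i)) K
      (⨁ i : ι, K[X] ⧸ (K[X] ∙ ((X : K[X]) ^ e i))) := DFinsupp.basis bQ
  let s := Fintype.card ι
  let σ : Fin s ≃ ι := (Fintype.equivFin ι).symm
  let k : Fin s → ℕ := fun t => e (σ t)
  let eqv : ((t : Fin s) × Fin (k t)) ≃ ((i : ι) × Fin (e i)) :=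
    Equiv.sigmaCongrLeft (β := fun i : ι => Fin (e i)) σ
  let B : Basis ((t : Fin s) × Fin (k t)) K V := (BD.reindex eqv.symm).map G.symm
  have hB : ∀ (t : Fin s) (j : Fin (k t)),
      B ⟨t, j⟩ = G.symm (DFinsupp.single (σ t)
        (Submodule.Quotient.mk ((X : K[X]) ^ (j : ℕ)))) := by
    intro t j
    show G.symm ((BD.reindex eqv.symm) ⟨t, j⟩) = _
    rw [Basis.reindex_apply, Equiv.symm_symm]
    have h3 : eqv ⟨t, j⟩ = ⟨σ t, j⟩ := rfl
    rw [h3]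
    have h4 : BD ⟨σ t, j⟩ = DFinsupp.single (σ t)
        (Submodule.Quotient.mk ((X : K[X]) ^ (j : ℕ))) := by
      show DFinsupp.basis bQ ⟨σ t, j⟩ = _
      rw [dfinsupp_basis_apply bQ (σ t) j, hbQ (σ t) j]
    rw [h4]
  let a : Fin s → V := fun t => if h : 0 < k t then B ⟨t, ⟨0, h⟩⟩ else 0
  have key : ∀ (t : Fin s), 0 < k t → ∀ (j : ℕ),
      (A ^ j) (a t) = G.symm (DFinsupp.single (σ t)
        (Submodule.Quotient.mk ((X : K[X]) ^ j))) := by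
    intro t ht j
    induction j with
    | zero =>
      show (A ^ 0) (a t) = _
      rw [pow_zero]
      have h4 : a t = B ⟨t, ⟨0, ht⟩⟩ := dif_pos ht
      rw [Module.End.one_apply, h4, hB t ⟨0, ht⟩]
    | succ j ih =>
      have h5 : (A ^ (j + 1)) (a t) = A ((A ^ j) (a t)) := by
        rw [pow_succ']
        rfl
      rw [h5, ih]
      apply G.injective
      rw [hG, LinearEquiv.apply_symm_apply, LinearEquiv.apply_symm_apply]
      rw [directSum_smul_single, ← Submodule.Quotient.mk_smul, smul_eq_mul, ← pow_succ']
  refine ⟨s, k, a, B, fun t => ?_, fun t j => ?_⟩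
  · rcases Nat.eq_zero_or_pos (k t) with h0 | hpos
    · have h6 : a t = 0 := dif_neg (by omega)
      rw [h6, map_zero]
    · rw [key t hpos (k t)]
      have h7 : (Submodule.Quotient.mk ((X : K[X]) ^ (k t)) :
          K[X] ⧸ (K[X] ∙ ((X : K[X]) ^ e (σ t)))) = 0 := by
        rw [Submodule.Quotient.mk_eq_zero]
        exact Submodule.mem_span_singleton_self _
      rw [h7, DFinsupp.single_zero, map_zero]
  · have hpos : 0 < k t := lt_of_le_of_lt (Nat.zero_le _) j.2
    rw [key t hpos (j : ℕ), hB t j]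

/-- Jordan normal form for nilpotent operators: if `A : V → V` is nilpotent on a
finite-dimensional vector space `V`, then `V` has a basis of the form
`{a₁, Aa₁, …, A^{k₁−1}a₁, …, a_s, …, A^{k_s−1}a_s}` with `A^{k_i} a_i = 0`. -/
theorem nilpotent_jordan_basis {K V : Type*} [Field K] [AddCommGroup V] [Module K V]
    [FiniteDimensional K V] (A : V →ₗ[K] V) (hA : IsNilpotent A) :
    ∃ (s : ℕ) (k : Fin s → ℕ) (a : Fin s → V)
      (B : Basis ((i : Fin s) × Fin (k i)) K V),
      (∀ i : Fin s, (A ^ (k i)) (a i) = 0) ∧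
      (∀ (i : Fin s) (j : Fin (k i)), B ⟨i, j⟩ = (A ^ (j : ℕ)) (a i)) :=
  nilpotent_jordan_basis_aux A hA
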